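/- Let E_k ∈ ℝ^{k×k} be as above with (E_k)_H = e_k e_k^T (rank-one) and (E_k)_A = toeplitz(−1,0,1). Then the hypocoercivity index of E_k is k−1; i.e., the smallest m such that Σ_{j=0}^m (E_k)_A^j (E_k)_H ((E_k)_A^T)^j > 0 is m = k−1. -/

import Mathlib

open Matrix

/-- The matrix `E_k` with superdiagonal `1`, subdiagonal `-1`, entry `(k,k) = 1`. -/
def Ek (k : ℕ) : Matrix (Fin k) (Fin k) ℝ :=
  Matrix.of fun i j =>
    (if (j : ℕ) = (i : ℕ) + 1 then 1 else 0)
      + (if (i : ℕ) = (j : ℕ) + 1 then -1 else 0)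
      + (if (i : ℕ) = k - 1 ∧ (j : ℕ) = k - 1 then 1 else 0)

/-- `T_m = Σ_{j=0}^m (E_k)_A^j (E_k)_H ((E_k)_A^T)^j`. -/
noncomputable def EkT (k m : ℕ) : Matrix (Fin k) (Fin k) ℝ :=
  ∑ j ∈ Finset.range (m+1),
    ((1/2 : ℝ) • (Ek k - (Ek k)ᵀ)) ^ j * ((1/2 : ℝ) • (Ek k + (Ek k)ᵀ)) *
      (((1/2 : ℝ) • (Ek k - (Ek k)ᵀ))ᵀ) ^ j

namespace EkAux

/-- The skew-symmetric part of `Ek`. -/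
noncomputable def M (k : ℕ) : Matrix (Fin k) (Fin k) ℝ := (1/2 : ℝ) • (Ek k - (Ek k)ᵀ)

lemma M_def (k : ℕ) : (1/2 : ℝ) • (Ek k - (Ek k)ᵀ) = M k := rfl

/-- The last standard basis vector. -/
noncomputable def e (k : ℕ) : Fin k → ℝ := fun i => if (i : ℕ) = k - 1 then 1 else 0

/-- `u k j = M^j e`. -/
noncomputable def u (k j : ℕ) : Fin k → ℝ := (M k ^ j) *ᵥ e k

lemma u_def (k j : ℕ) : (M k ^ j) *ᵥ e k = u k j := rfl

lemma M_apply (k : ℕ) (i j : Fin k) :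
    M k i j = (if (j : ℕ) = (i : ℕ) + 1 then 1 else 0)
      - (if (i : ℕ) = (j : ℕ) + 1 then 1 else 0) := by
  simp only [M, Ek, Matrix.smul_apply, Matrix.sub_apply, Matrix.transpose_apply, Matrix.of_apply,
    smul_eq_mul]
  split_ifs <;> (first | ring1 | (exfalso; omega))

lemma Hm_eq (k : ℕ) : (1/2 : ℝ) • (Ek k + (Ek k)ᵀ) = vecMulVec (e k) (e k) := by
  ext i j
  simp only [Ek, Matrix.smul_apply, Matrix.add_apply, Matrix.transpose_apply, Matrix.of_apply,
    smul_eq_mul, vecMulVec_apply, e]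
  split_ifs <;> (first | ring1 | (exfalso; omega))

lemma sum_ite_nat (k : ℕ) (w : Fin k → ℝ) (c : ℕ) :
    (∑ j : Fin k, if (j : ℕ) = c then w j else 0) = if h : c < k then w ⟨c, h⟩ else 0 := by
  by_cases h : c < k
  · rw [dif_pos h, Finset.sum_eq_single (⟨c, h⟩ : Fin k)]
    · simp
    · intro b _ hb
      exact if_neg (fun hc => hb (Fin.ext hc))
    · simp
  · rw [dif_neg h, Finset.sum_eq_zero]
    intro b _
    have hbk := b.2
    exact if_neg (fun hc => h (by omega))

lemma sum_ite_nat' (k : ℕ) (w : Fin k → ℝ) (i : Fin k) :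
    (∑ j : Fin k, if (i : ℕ) = (j : ℕ) + 1 then w j else 0)
      = if h : 0 < (i : ℕ) then w ⟨(i : ℕ) - 1, Nat.lt_of_le_of_lt (Nat.sub_le _ _) i.2⟩
        else 0 := by
  by_cases h : 0 < (i : ℕ)
  · rw [dif_pos h,
      Finset.sum_eq_single (⟨(i : ℕ) - 1, Nat.lt_of_le_of_lt (Nat.sub_le _ _) i.2⟩ : Fin k)]
    · exact if_pos (show (i : ℕ) = (i : ℕ) - 1 + 1 by omega)
    · intro b _ hb
      refine if_neg (fun hc => hb (Fin.ext (show (b : ℕ) = (i : ℕ) - 1 by omega)))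
    · simp
  · rw [dif_neg h, Finset.sum_eq_zero]
    intro b _
    exact if_neg (by omega)

lemma mulVec_M (k : ℕ) (w : Fin k → ℝ) (i : Fin k) :
    (M k *ᵥ w) i =
      (if h : (i : ℕ) + 1 < k then w ⟨(i : ℕ) + 1, h⟩ else 0)
        - (if h : 0 < (i : ℕ) then w ⟨(i : ℕ) - 1, Nat.lt_of_le_of_lt (Nat.sub_le _ _) i.2⟩
            else 0) := by
  simp only [mulVec, dotProduct, M_apply, sub_mul, ite_mul, one_mul, zero_mul,
    Finset.sum_sub_distrib]
  rw [sum_ite_nat k w ((i : ℕ) + 1), sum_ite_nat' k w i]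

lemma u_succ (k j : ℕ) : u k (j+1) = M k *ᵥ u k j := by
  rw [u, u, pow_succ', ← mulVec_mulVec]

lemma u_spec (k j : ℕ) : ∀ i : Fin k,
    ((i : ℕ) + j < k - 1 → u k j i = 0) ∧ ((i : ℕ) + j = k - 1 → u k j i = 1) := by
  induction j with
  | zero =>
    intro i
    have h0 : u k 0 i = e k i := by rw [u, pow_zero, one_mulVec]
    rw [h0]
    constructor
    · intro hi; rw [e, if_neg (by omega)]
    · intro hi; rw [e, if_pos (by omega)]
  | succ j IH =>
    intro i
    rw [u_succ, mulVec_M]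
    constructor
    · intro hi
      have h1 : (i : ℕ) + 1 < k := by omega
      rw [dif_pos h1, (IH ⟨(i : ℕ) + 1, h1⟩).1 (show (i : ℕ) + 1 + j < k - 1 by omega)]
      by_cases h2 : 0 < (i : ℕ)
      · rw [dif_pos h2,
          (IH ⟨(i : ℕ) - 1, Nat.lt_of_le_of_lt (Nat.sub_le _ _) i.2⟩).1
            (show (i : ℕ) - 1 + j < k - 1 by omega)]
        ring
      · rw [dif_neg h2]; ring
    · intro hi
      have h1 : (i : ℕ) + 1 < k := by omega
      rw [dif_pos h1, (IH ⟨(i : ℕ) + 1, h1⟩).2 (show (i : ℕ) + 1 + j = k - 1 by omega)]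
      by_cases h2 : 0 < (i : ℕ)
      · rw [dif_pos h2,
          (IH ⟨(i : ℕ) - 1, Nat.lt_of_le_of_lt (Nat.sub_le _ _) i.2⟩).1
            (show (i : ℕ) - 1 + j < k - 1 by omega)]
        ring
      · rw [dif_neg h2]; ring

lemma mul_vecMulVec (k : ℕ) (A : Matrix (Fin k) (Fin k) ℝ) (a b : Fin k → ℝ) :
    A * vecMulVec a b = vecMulVec (A *ᵥ a) b := by
  ext i j
  simp [Matrix.mul_apply, vecMulVec_apply, mulVec, dotProduct, Finset.sum_mul, mul_assoc]

lemma vecMulVec_mul (k : ℕ) (A : Matrix (Fin k) (Fin k) ℝ) (a b : Fin k → ℝ) :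
    vecMulVec a b * Aᵀ = vecMulVec a (A *ᵥ b) := by
  ext i j
  simp only [Matrix.mul_apply, vecMulVec_apply, transpose_apply, mulVec, dotProduct,
    Finset.mul_sum]
  apply Finset.sum_congr rfl
  intro t _
  ring

lemma EkT_eq (k m : ℕ) :
    EkT k m = ∑ j ∈ Finset.range (m+1), vecMulVec (u k j) (u k j) := by
  rw [EkT]
  apply Finset.sum_congr rfl
  intro j _
  rw [M_def, Hm_eq, ← transpose_pow, mul_vecMulVec, vecMulVec_mul, u_def]

lemma dot_vMv (k : ℕ) (a x : Fin k → ℝ) :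
    x ⬝ᵥ (vecMulVec a a *ᵥ x) = (a ⬝ᵥ x) ^ 2 := by
  simp only [dotProduct, mulVec, vecMulVec_apply, Finset.mul_sum, sq, Finset.sum_mul]
  apply Finset.sum_congr rfl
  intro i _
  apply Finset.sum_congr rfl
  intro t _
  ring

lemma quad (k m : ℕ) (x : Fin k → ℝ) :
    x ⬝ᵥ (EkT k m *ᵥ x) = ∑ j ∈ Finset.range (m+1), (u k j ⬝ᵥ x) ^ 2 := by
  rw [EkT_eq]
  have h1 : (∑ j ∈ Finset.range (m+1), vecMulVec (u k j) (u k j)) *ᵥ x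
      = ∑ j ∈ Finset.range (m+1), (vecMulVec (u k j) (u k j)) *ᵥ x := by
    ext i
    simp only [mulVec, dotProduct, Finset.sum_apply, Matrix.sum_apply, Finset.sum_mul]
    rw [Finset.sum_comm]
  rw [h1]
  have h2 : x ⬝ᵥ (∑ j ∈ Finset.range (m+1), (vecMulVec (u k j) (u k j)) *ᵥ x)
      = ∑ j ∈ Finset.range (m+1), x ⬝ᵥ ((vecMulVec (u k j) (u k j)) *ᵥ x) := by
    simp only [dotProduct, Finset.sum_apply, Finset.mul_sum]
    rw [Finset.sum_comm]
  rw [h2]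
  exact Finset.sum_congr rfl fun j _ => dot_vMv k (u k j) x

lemma EkT_isHermitian (k m : ℕ) : (EkT k m).IsHermitian := by
  show (EkT k m)ᴴ = EkT k m
  ext i j
  simp only [EkT_eq, Matrix.conjTranspose_apply, Matrix.sum_apply, vecMulVec_apply, star_trivial]
  apply Finset.sum_congr rfl
  intro t _
  ring

lemma eq_zero_of_dot (k : ℕ) (hk : 1 ≤ k) (x : Fin k → ℝ)
    (h : ∀ j < k, u k j ⬝ᵥ x = 0) : x = 0 := by
  have key : ∀ j, ∀ i : Fin k, (i : ℕ) + j = k - 1 → x i = 0 := by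
    intro j
    induction j using Nat.strong_induction_on with
    | _ j IH =>
      intro i hi
      have hik := i.2
      have hjk : j < k := by omega
      have h0 := h j hjk
      rw [dotProduct, Finset.sum_eq_single i] at h0
      · rw [(u_spec k j i).2 hi, one_mul] at h0
        exact h0
      · intro t _ ht
        have htk := t.2
        rcases lt_trichotomy ((t : ℕ) + j) (k - 1) with hlt | heq | hgt
        · rw [(u_spec k j t).1 hlt, zero_mul]
        · exact absurd (Fin.ext (show (t : ℕ) = (i : ℕ) by omega)) ht
        · have hx : x t = 0 := IH (k - 1 - (t : ℕ)) (by omega) t (by omega)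
          rw [hx, mul_zero]
      · simp
  funext i
  have hik := i.2
  exact key (k - 1 - (i : ℕ)) i (by omega)

end EkAux

open EkAux in
/-- The hypocoercivity index of `E_k` is `k - 1`: `T_{k-1} > 0` but `T_m` is not
positive definite for any `m < k - 1`. -/
theorem Ek_hypocoercivity_index (k : ℕ) (hk : 1 ≤ k) :
    (EkT k (k-1)).PosDef ∧ ∀ m < k - 1, ¬ (EkT k m).PosDef := by
  constructor
  · refine Matrix.PosDef.of_dotProduct_mulVec_pos (EkT_isHermitian k _) fun x hx => ?_
    have hstar : (star x : Fin k → ℝ) = x := by simp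
    rw [hstar, quad]
    have hnn : (0:ℝ) ≤ ∑ j ∈ Finset.range (k-1+1), (u k j ⬝ᵥ x) ^ 2 :=
      Finset.sum_nonneg fun j _ => sq_nonneg _
    rcases eq_or_lt_of_le hnn with h | h
    · exfalso
      apply hx
      apply eq_zero_of_dot k hk
      intro j hj
      have hmem : j ∈ Finset.range (k - 1 + 1) := Finset.mem_range.2 (by omega)
      have hz := (Finset.sum_eq_zero_iff_of_nonneg (fun j _ => sq_nonneg (u k j ⬝ᵥ x))).mp
        h.symm j hmem
      exact (pow_eq_zero_iff (by norm_num : (2:ℕ) ≠ 0)).mp hz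
    · exact h
  · intro m hm hpd
    set x : Fin k → ℝ := fun i => if (i : ℕ) = 0 then 1 else 0 with hxdef
    have hx0 : x ≠ 0 := by
      intro hc
      have h0 : x ⟨0, by omega⟩ = 0 := by rw [hc]; rfl
      simp [hxdef] at h0
    have hpos := hpd.dotProduct_mulVec_pos hx0
    have hstar : (star x : Fin k → ℝ) = x := by simp
    rw [hstar, quad] at hpos
    have hz : ∑ j ∈ Finset.range (m+1), (u k j ⬝ᵥ x) ^ 2 = 0 := by
      apply Finset.sum_eq_zero
      intro j hj
      have hj' : j < m + 1 := Finset.mem_range.mp hj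
      have hd : u k j ⬝ᵥ x = u k j ⟨0, by omega⟩ := by
        rw [dotProduct, Finset.sum_eq_single (⟨0, by omega⟩ : Fin k)]
        · simp [hxdef]
        · intro b _ hb
          have hb0 : (b : ℕ) ≠ 0 := fun hc => hb (Fin.ext hc)
          simp [hxdef, hb0]
        · simp
      rw [hd, (u_spec k j _).1 (show (0:ℕ) + j < k - 1 by omega)]
      ring
    rw [hz] at hpos
    exact lt_irrefl _ hpos
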